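/- For λ > 0 and z > 0, ∫₀^∞ exp(2z√s) · λ exp(−λ s) ds ≤ 1 + 2√π · z · λ^{−1/2} · exp(z² / λ). -/

import Mathlib

open MeasureTheory

/-- For `λ > 0` and `z > 0`,
`∫₀^∞ exp(2z√s) λ exp(−λs) ds ≤ 1 + 2√π z λ^{−1/2} exp(z²/λ)`. -/
theorem stmt_10 (lam z : ℝ) (hlam : 0 < lam) (hz : 0 < z) :
    (∫ s in Set.Ioi (0:ℝ), Real.exp (2 * z * Real.sqrt s) * (lam * Real.exp (-lam * s))) ≤
      1 + 2 * Real.sqrt Real.pi * z * lam ^ (-(1:ℝ)/2) * Real.exp (z ^ 2 / lam) := by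
  set a : ℝ := z / lam with ha
  have ha_pos : 0 < a := div_pos hz hlam
  -- integrability facts
  have int_gauss : Integrable (fun v : ℝ => Real.exp (-lam * v ^ 2)) :=
    integrable_exp_neg_mul_sq hlam
  have int_gauss_shift : Integrable (fun u : ℝ => Real.exp (-lam * (u - a) ^ 2)) :=
    int_gauss.comp_sub_right a
  have int_mul_gauss : Integrable (fun v : ℝ => v * Real.exp (-lam * v ^ 2)) :=
    integrable_mul_exp_neg_mul_sq hlam
  have int_mul_gauss_shift :
      Integrable (fun u : ℝ => (u - a) * Real.exp (-lam * (u - a) ^ 2)) :=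
    int_mul_gauss.comp_sub_right a
  -- Step 1: substitution s = u²
  have h1 : (∫ s in Set.Ioi (0:ℝ), Real.exp (2 * z * Real.sqrt s) * (lam * Real.exp (-lam * s)))
      = ∫ u in Set.Ioi (0:ℝ),
          2 * lam * Real.exp (z ^ 2 / lam) * (u * Real.exp (-lam * (u - a) ^ 2)) := by
    rw [← integral_comp_rpow_Ioi (fun s => Real.exp (2 * z * Real.sqrt s) *
      (lam * Real.exp (-lam * s))) (p := 2) two_ne_zero]
    refine setIntegral_congr_fun measurableSet_Ioi fun u hu => ?_
    have hu0 : (0:ℝ) < u := hu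
    have h2 : u ^ (2:ℝ) = u ^ 2 := by
      rw [show ((2:ℝ)) = ((2:ℕ):ℝ) by norm_num, Real.rpow_natCast]
    have h21 : u ^ ((2:ℝ) - 1) = u := by norm_num
    have hsq : Real.sqrt (u ^ 2) = u := by
      rw [Real.sqrt_sq hu0.le]
    simp only [h2, h21, hsq, smul_eq_mul]
    rw [show |(2:ℝ)| = 2 from abs_of_pos two_pos]
    have key : Real.exp (2 * z * u) * Real.exp (-lam * u ^ 2)
        = Real.exp (z ^ 2 / lam) * Real.exp (-lam * (u - a) ^ 2) := by
      rw [← Real.exp_add, ← Real.exp_add]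
      congr 1
      rw [ha]
      field_simp
      ring
    linear_combination 2 * u * lam * key
  rw [h1]
  -- Step 2: compute/bound the gaussian-type integrals
  have eq1 : (∫ u in Set.Ioi (0:ℝ), (u - a) * Real.exp (-lam * (u - a) ^ 2))
      = Real.exp (-lam * a ^ 2) / (2 * lam) := by
    have hderiv : ∀ u ∈ Set.Ici (0:ℝ),
        HasDerivAt (fun u : ℝ => -(1 / (2 * lam)) * Real.exp (-lam * (u - a) ^ 2))
          ((u - a) * Real.exp (-lam * (u - a) ^ 2)) u := by
      intro u _
      have h : HasDerivAt (fun u : ℝ => -lam * (u - a) ^ 2)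
          (-lam * (2 * (u - a))) u := by
        have := ((hasDerivAt_id u).sub_const a).pow 2
        simpa using this.const_mul (-lam)
      have := (h.exp).const_mul (-(1 / (2 * lam)))
      refine this.congr_deriv ?_
      linear_combination ((u - a) * Real.exp (-lam * (u - a) ^ 2)) * mul_inv_cancel₀ hlam.ne'
    have htend : Filter.Tendsto (fun u : ℝ => -(1 / (2 * lam)) *
        Real.exp (-lam * (u - a) ^ 2)) Filter.atTop (nhds 0) := by
      have h1 : Filter.Tendsto (fun u : ℝ => -lam * (u - a) ^ 2) Filter.atTop
          Filter.atBot := by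
        apply Filter.Tendsto.const_mul_atTop_of_neg (neg_lt_zero.mpr hlam)
        exact (Filter.tendsto_atTop_add_const_right _ (-a) Filter.tendsto_id).atTop_mul_atTop₀
          (Filter.tendsto_atTop_add_const_right _ (-a) Filter.tendsto_id) |>.congr
          (by intro x; simp only [id_eq]; ring)
      have := Real.tendsto_exp_atBot.comp h1
      simpa using this.const_mul (-(1 / (2 * lam)))
    have := integral_Ioi_of_hasDerivAt_of_tendsto' hderiv
      int_mul_gauss_shift.integrableOn htend
    rw [this]
    simp only [sub_zero, zero_sub, neg_sub]
    field_simp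
  have le2 : (∫ u in Set.Ioi (0:ℝ), Real.exp (-lam * (u - a) ^ 2))
      ≤ Real.sqrt (Real.pi / lam) := by
    have h := setIntegral_le_integral (s := Set.Ioi (0:ℝ)) int_gauss_shift
      (Filter.Eventually.of_forall fun u => (Real.exp_pos _).le)
    calc (∫ u in Set.Ioi (0:ℝ), Real.exp (-lam * (u - a) ^ 2))
        ≤ ∫ u : ℝ, Real.exp (-lam * (u - a) ^ 2) := h
      _ = ∫ v : ℝ, Real.exp (-lam * v ^ 2) := by
          exact integral_sub_right_eq_self (fun v => Real.exp (-lam * v ^ 2)) a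
      _ = Real.sqrt (Real.pi / lam) := integral_gaussian lam
  -- Step 3: combine
  have hsplit : (∫ u in Set.Ioi (0:ℝ), u * Real.exp (-lam * (u - a) ^ 2))
      = (∫ u in Set.Ioi (0:ℝ), (u - a) * Real.exp (-lam * (u - a) ^ 2))
        + a * (∫ u in Set.Ioi (0:ℝ), Real.exp (-lam * (u - a) ^ 2)) := by
    rw [← MeasureTheory.integral_const_mul, ← integral_add int_mul_gauss_shift.integrableOn
      (int_gauss_shift.integrableOn.const_mul a)]
    refine setIntegral_congr_fun measurableSet_Ioi fun u _ => ?_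
    ring
  have hbound : (∫ u in Set.Ioi (0:ℝ), u * Real.exp (-lam * (u - a) ^ 2))
      ≤ Real.exp (-lam * a ^ 2) / (2 * lam) + a * Real.sqrt (Real.pi / lam) := by
    rw [hsplit, eq1]
    exact add_le_add (le_refl _) (mul_le_mul_of_nonneg_left le2 ha_pos.le)
  rw [integral_const_mul]
  have hc : (0:ℝ) < 2 * lam * Real.exp (z ^ 2 / lam) :=
    mul_pos (by linarith) (Real.exp_pos _)
  calc 2 * lam * Real.exp (z ^ 2 / lam) *
        (∫ u in Set.Ioi (0:ℝ), u * Real.exp (-lam * (u - a) ^ 2))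
      ≤ 2 * lam * Real.exp (z ^ 2 / lam) *
        (Real.exp (-lam * a ^ 2) / (2 * lam) + a * Real.sqrt (Real.pi / lam)) :=
        mul_le_mul_of_nonneg_left hbound hc.le
    _ = 1 + 2 * Real.sqrt Real.pi * z * lam ^ (-(1:ℝ)/2) * Real.exp (z ^ 2 / lam) := by
        have hla : -lam * a ^ 2 = -(z ^ 2 / lam) := by
          rw [ha]
          field_simp
        have hrpow : lam ^ (-(1:ℝ)/2) = (Real.sqrt lam)⁻¹ := by
          rw [neg_div, Real.rpow_neg hlam.le, ← Real.sqrt_eq_rpow]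
        have hsqrt : Real.sqrt (Real.pi / lam) = Real.sqrt Real.pi / Real.sqrt lam :=
          Real.sqrt_div Real.pi_pos.le lam
        have hsl : Real.sqrt lam ≠ 0 := (Real.sqrt_pos.mpr hlam).ne'
        rw [hla, Real.exp_neg, hsqrt, hrpow, ha]
        field_simp [ha, Real.exp_ne_zero]
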